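/- arXiv:2009.05630 — 3 statements merged into one kernel-verified Lean document; each statement's English description precedes it below -/
import Mathlib

section
/- Let α > 0 and t > 0 be real numbers, and let ψ₁, ψ₂ : ℚ_p^n → ℂ be radial functions such that: (a) Φ(ξ) := max{|ψ₁(ξ)|, |ψ₂(ξ)|} > 0 for all ξ ∈ ℚ_p^n, and (b) |ψ₁| and |ψ₂| are increasing with respect to the norm, i.e. ‖x‖_p ≤ ‖y‖_p implies |ψ_i(x)| ≤ |ψ_i(y)| for i = 1, 2. Let x ∈ ℚ_p^n with x ≠ 0, let ξ_j ∈ ℚ_p^n (j = 0, 1, 2, …) be any points with ‖ξ_j‖_p = ‖x‖_p^{−1} p^{−j}, and let η ∈ ℚ_p^n be any point with ‖η‖_p = ‖x‖_p^{−1} p. Then the heat-kernel value Z(x,t) := ‖x‖_p^{−n} · [ (1 − p^{−n}) Σ_{j=0}^{∞} p^{−nj} exp(−t · Φ(ξ_j)^{−α}) − exp(−t · Φ(η)^{−α}) ] satisfies Z(x,t) ≤ 0. -/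
/-- The heat kernel attached to the generalized Bessel potential is
nonpositive away from the origin: with `Φ(ξ) = max {|ψ₁(ξ)|, |ψ₂(ξ)|} > 0` and `|ψ₁|, |ψ₂|`
increasing with respect to the norm, the series representation `Z(x,t)` satisfies
`Z(x,t) ≤ 0` for `x ≠ 0` and `t > 0`. -/
theorem heat_kernel_nonpos (p : ℕ) [Fact p.Prime] (n : ℕ) (hn : 0 < n)
    (α t : ℝ) (hα : 0 < α) (ht : 0 < t)
    (ψ₁ ψ₂ : (Fin n → ℚ_[p]) → ℂ)
    (hrad₁ : ∀ x y : Fin n → ℚ_[p], ‖x‖ = ‖y‖ → ψ₁ x = ψ₁ y)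
    (hrad₂ : ∀ x y : Fin n → ℚ_[p], ‖x‖ = ‖y‖ → ψ₂ x = ψ₂ y)
    (hΦ : ∀ ξ : Fin n → ℚ_[p], 0 < max ‖ψ₁ ξ‖ ‖ψ₂ ξ‖)
    (hmono₁ : ∀ x y : Fin n → ℚ_[p], ‖x‖ ≤ ‖y‖ → ‖ψ₁ x‖ ≤ ‖ψ₁ y‖)
    (hmono₂ : ∀ x y : Fin n → ℚ_[p], ‖x‖ ≤ ‖y‖ → ‖ψ₂ x‖ ≤ ‖ψ₂ y‖)
    (x : Fin n → ℚ_[p]) (hx : x ≠ 0)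
    (ξ : ℕ → Fin n → ℚ_[p])
    (hξ : ∀ j : ℕ, ‖ξ j‖ = ‖x‖⁻¹ * (p : ℝ) ^ (-(j : ℤ)))
    (η : Fin n → ℚ_[p]) (hη : ‖η‖ = ‖x‖⁻¹ * (p : ℝ))
    (Z : ℝ)
    (hZ : Z = ‖x‖ ^ (-(n : ℤ)) *
      ((1 - (p : ℝ) ^ (-(n : ℤ))) *
          (∑' j : ℕ, (p : ℝ) ^ (-((n : ℤ) * (j : ℤ))) *
            Real.exp (-t * (max ‖ψ₁ (ξ j)‖ ‖ψ₂ (ξ j)‖) ^ (-α))) -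
        Real.exp (-t * (max ‖ψ₁ η‖ ‖ψ₂ η‖) ^ (-α)))) :
    Z ≤ 0 := by
  have hp : (1:ℝ) < p := by exact_mod_cast (Fact.out : p.Prime).one_lt
  have hxpos : 0 < ‖x‖ := norm_pos_iff.mpr hx
  set E : ℝ := Real.exp (-t * (max ‖ψ₁ η‖ ‖ψ₂ η‖) ^ (-α)) with hE
  have hle : ∀ j : ℕ, ‖ξ j‖ ≤ ‖η‖ := by
    intro j
    rw [hξ j, hη]
    apply mul_le_mul_of_nonneg_left _ (le_of_lt (inv_pos.mpr hxpos))
    calc (p:ℝ) ^ (-(j:ℤ)) ≤ 1 := by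
          apply zpow_le_one_of_nonpos₀ (le_of_lt hp)
          simp
      _ ≤ (p:ℝ) := le_of_lt hp
  have hexp : ∀ j : ℕ,
      Real.exp (-t * (max ‖ψ₁ (ξ j)‖ ‖ψ₂ (ξ j)‖) ^ (-α)) ≤ E := by
    intro j
    apply Real.exp_le_exp.mpr
    have hΦle : max ‖ψ₁ (ξ j)‖ ‖ψ₂ (ξ j)‖ ≤ max ‖ψ₁ η‖ ‖ψ₂ η‖ :=
      max_le_max (hmono₁ _ _ (hle j)) (hmono₂ _ _ (hle j))
    have hpow : (max ‖ψ₁ η‖ ‖ψ₂ η‖) ^ (-α) ≤ (max ‖ψ₁ (ξ j)‖ ‖ψ₂ (ξ j)‖) ^ (-α) :=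
      Real.rpow_le_rpow_of_nonpos (hΦ (ξ j)) hΦle (neg_nonpos.mpr (le_of_lt hα))
    nlinarith
  set r : ℝ := (p:ℝ) ^ (-(n:ℤ)) with hr
  have hr0 : 0 < r := zpow_pos (by linarith) _
  have hr1 : r < 1 := by
    rw [hr]
    apply zpow_lt_one_of_neg₀ hp
    simpa using hn
  have hterm : ∀ j : ℕ, (p:ℝ) ^ (-((n:ℤ) * (j:ℤ))) = r ^ j := by
    intro j
    rw [hr, ← zpow_natCast ((p:ℝ) ^ (-(n:ℤ))) j, ← zpow_mul]
    ring_nf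
  have hEpos : 0 < E := Real.exp_pos _
  have hgsum : Summable (fun j : ℕ => r ^ j * E) :=
    (summable_geometric_of_lt_one (le_of_lt hr0) hr1).mul_right E
  have hfsum : Summable (fun j : ℕ => (p:ℝ) ^ (-((n:ℤ) * (j:ℤ))) *
      Real.exp (-t * (max ‖ψ₁ (ξ j)‖ ‖ψ₂ (ξ j)‖) ^ (-α))) := by
    apply Summable.of_nonneg_of_le _ _ hgsum
    · intro j; positivity
    · intro j
      rw [hterm j]
      exact mul_le_mul_of_nonneg_left (hexp j) (le_of_lt (pow_pos hr0 j))
  have htsum_le : (∑' j : ℕ, (p:ℝ) ^ (-((n:ℤ) * (j:ℤ))) *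
      Real.exp (-t * (max ‖ψ₁ (ξ j)‖ ‖ψ₂ (ξ j)‖) ^ (-α))) ≤ (1 - r)⁻¹ * E := by
    have hfg : ∀ j : ℕ, (p:ℝ) ^ (-((n:ℤ) * (j:ℤ))) *
        Real.exp (-t * (max ‖ψ₁ (ξ j)‖ ‖ψ₂ (ξ j)‖) ^ (-α)) ≤ r ^ j * E := by
      intro j
      rw [hterm j]
      exact mul_le_mul_of_nonneg_left (hexp j) (le_of_lt (pow_pos hr0 j))
    have := Summable.tsum_le_tsum hfg hfsum hgsum
    calc _ ≤ ∑' j : ℕ, r ^ j * E := this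
      _ = (∑' j : ℕ, r ^ j) * E := tsum_mul_right
      _ = (1 - r)⁻¹ * E := by rw [tsum_geometric_of_lt_one (le_of_lt hr0) hr1]
  rw [hZ]
  apply mul_nonpos_of_nonneg_of_nonpos
  · positivity
  · have h1r : 0 < 1 - r := by linarith
    have : (1 - r) * (∑' j : ℕ, (p:ℝ) ^ (-((n:ℤ) * (j:ℤ))) *
        Real.exp (-t * (max ‖ψ₁ (ξ j)‖ ‖ψ₂ (ξ j)‖) ^ (-α))) ≤ (1 - r) * ((1 - r)⁻¹ * E) :=
      mul_le_mul_of_nonneg_left htsum_le (le_of_lt h1r)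
    rw [← mul_assoc, mul_inv_cancel₀ (ne_of_gt h1r), one_mul] at this
    rw [hr] at this
    linarith
end

section
/- Let a > 0 and β > 0 be real numbers. Then the function ψ : ℚ_p^n → ℂ defined by ψ(ξ) = a‖ξ‖_p^β is negative definite: for every m ≥ 1, all points x_1, …, x_m ∈ ℚ_p^n and all λ_1, …, λ_m ∈ ℂ, the double sum Σ_{i,j=1}^{m} (ψ(x_i) + conj(ψ(x_j)) − ψ(x_i − x_j)) λ_i conj(λ_j) is a nonnegative real number (its imaginary part is zero and its real part is ≥ 0). -/
open Finset


lemma lemA {m : ℕ} {Q : Type} [DecidableEq Q] (f : Fin m → Q) (q0 : Q) (lam : Fin m → ℂ) :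
    ∃ r : ℝ, 0 ≤ r ∧
      ∑ i : Fin m, ∑ j : Fin m,
        (((if f i = q0 then (0:ℝ) else 1) + (if f j = q0 then (0:ℝ) else 1)
            - (if f i = f j then (0:ℝ) else 1) : ℝ) : ℂ) * lam i * starRingEnd ℂ (lam j) = r := by
  classical
  set T : Q → ℂ := fun q => ∑ i ∈ univ.filter (fun i => f i = q), lam i with hT
  set L : ℂ := ∑ i, lam i with hL
  have hA : ∀ q : Q, ∑ j : Fin m, (if f j = q then (1:ℂ) else 0) * starRingEnd ℂ (lam j)
      = starRingEnd ℂ (T q) := by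
    intro q
    rw [hT]
    simp [map_sum, Finset.sum_filter, ite_mul, apply_ite (starRingEnd ℂ)]
  have hA0 : ∀ q : Q, ∑ i : Fin m, (if f i = q then (1:ℂ) else 0) * lam i = T q := by
    intro q
    rw [hT]
    simp only [Finset.sum_filter, ite_mul, one_mul, zero_mul]
  have entry_eq : ∀ i j : Fin m,
      (((if f i = q0 then (0:ℝ) else 1) + (if f j = q0 then (0:ℝ) else 1)
          - (if f i = f j then (0:ℝ) else 1) : ℝ) : ℂ) * lam i * starRingEnd ℂ (lam j)
      = lam i * starRingEnd ℂ (lam j)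
        - ((if f i = q0 then (1:ℂ) else 0) * lam i) * starRingEnd ℂ (lam j)
        - lam i * ((if f j = q0 then (1:ℂ) else 0) * starRingEnd ℂ (lam j))
        + lam i * ((if f j = f i then (1:ℂ) else 0) * starRingEnd ℂ (lam j)) := by
    intro i j
    have h3' : (f j = f i) = (f i = f j) := propext ⟨Eq.symm, Eq.symm⟩
    simp only [h3']
    split_ifs <;> push_cast <;> ring
  have step1 : (∑ i : Fin m, ∑ j : Fin m,
        (((if f i = q0 then (0:ℝ) else 1) + (if f j = q0 then (0:ℝ) else 1)
            - (if f i = f j then (0:ℝ) else 1) : ℝ) : ℂ) * lam i * starRingEnd ℂ (lam j))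
      = L * starRingEnd ℂ L - T q0 * starRingEnd ℂ L - L * starRingEnd ℂ (T q0)
        + ∑ i : Fin m, lam i * starRingEnd ℂ (T (f i)) := by
    have inner : ∀ i : Fin m, ∑ j : Fin m,
        (((if f i = q0 then (0:ℝ) else 1) + (if f j = q0 then (0:ℝ) else 1)
            - (if f i = f j then (0:ℝ) else 1) : ℝ) : ℂ) * lam i * starRingEnd ℂ (lam j)
        = lam i * starRingEnd ℂ L - ((if f i = q0 then (1:ℂ) else 0) * lam i) * starRingEnd ℂ L
          - lam i * starRingEnd ℂ (T q0) + lam i * starRingEnd ℂ (T (f i)) := by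
      intro i
      rw [Finset.sum_congr rfl (fun j _ => entry_eq i j)]
      rw [Finset.sum_add_distrib, Finset.sum_sub_distrib, Finset.sum_sub_distrib,
        ← Finset.mul_sum, ← Finset.mul_sum, ← Finset.mul_sum, ← Finset.mul_sum,
        hA q0, hA (f i)]
      simp [hL, map_sum]
    rw [Finset.sum_congr rfl (fun i _ => inner i)]
    rw [Finset.sum_add_distrib, Finset.sum_sub_distrib, Finset.sum_sub_distrib,
      ← Finset.sum_mul, ← Finset.sum_mul, ← Finset.sum_mul, hA0 q0]
  have hfiber : ∑ i : Fin m, lam i * starRingEnd ℂ (T (f i))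
      = ∑ q ∈ univ.image f, T q * starRingEnd ℂ (T q) := by
    rw [← Finset.sum_fiberwise_of_maps_to (fun i _ => Finset.mem_image_of_mem f (Finset.mem_univ i))
      (fun i => lam i * starRingEnd ℂ (T (f i)))]
    refine Finset.sum_congr rfl fun q hq => ?_
    calc ∑ i ∈ univ.filter (fun i => f i = q), lam i * starRingEnd ℂ (T (f i))
        = ∑ i ∈ univ.filter (fun i => f i = q), lam i * starRingEnd ℂ (T q) :=
          Finset.sum_congr rfl fun i hi => by rw [(Finset.mem_filter.mp hi).2]
      _ = T q * starRingEnd ℂ (T q) := by rw [← Finset.sum_mul]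
  refine ⟨Complex.normSq (L - T q0) + ∑ q ∈ (univ.image f).erase q0, Complex.normSq (T q),
    add_nonneg (Complex.normSq_nonneg _) (Finset.sum_nonneg fun q _ => Complex.normSq_nonneg _),
    ?_⟩
  rw [step1, hfiber]
  push_cast
  rw [← Complex.mul_conj]
  by_cases hq0 : q0 ∈ univ.image f
  · rw [← Finset.add_sum_erase _ _ hq0]
    rw [Finset.sum_congr rfl (fun q _ => (Complex.mul_conj (T q)).symm)]
    rw [map_sub]
    ring
  · have hempty : univ.filter (fun i => f i = q0) = ∅ :=
      Finset.filter_eq_empty_iff.mpr fun i _ h => hq0 (h ▸ Finset.mem_image_of_mem f (Finset.mem_univ i))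
    have hT0 : T q0 = 0 := by rw [hT]; simp [hempty]
    rw [Finset.erase_eq_of_notMem hq0]
    rw [Finset.sum_congr rfl (fun q _ => (Complex.mul_conj (T q)).symm)]
    rw [hT0, map_sub, map_zero]
    ring

lemma pi_padic_ultra {p n : ℕ} [Fact p.Prime] (x y : Fin n → ℚ_[p]) :
    ‖x + y‖ ≤ max ‖x‖ ‖y‖ := by
  rw [pi_norm_le_iff_of_nonneg (le_max_of_le_left (norm_nonneg x))]
  intro i
  refine le_trans (Padic.nonarchimedean (x i) (y i)) ?_
  exact max_le_max (norm_le_pi_norm x i) (norm_le_pi_norm y i)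

def ballSetoid (p n : ℕ) [Fact p.Prime] (t : ℝ) (ht : 0 < t) : Setoid (Fin n → ℚ_[p]) where
  r x y := ‖x - y‖ < t
  iseqv := by
    constructor
    · intro x; simpa using ht
    · intro x y h; rwa [norm_sub_rev] at h
    · intro x y z h1 h2
      have : ‖x - z‖ ≤ max ‖x - y‖ ‖y - z‖ := by
        have := pi_padic_ultra (x - y) (y - z)
        simpa using this
      exact lt_of_le_of_lt this (max_lt h1 h2)

lemma lemB {p n m : ℕ} [Fact p.Prime] {t : ℝ} (ht : 0 < t)
    (x : Fin m → Fin n → ℚ_[p]) (lam : Fin m → ℂ) :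
    ∃ r : ℝ, 0 ≤ r ∧
      ∑ i : Fin m, ∑ j : Fin m,
        (((if t ≤ ‖x i‖ then (1:ℝ) else 0) + (if t ≤ ‖x j‖ then (1:ℝ) else 0)
            - (if t ≤ ‖x i - x j‖ then (1:ℝ) else 0) : ℝ) : ℂ) * lam i * starRingEnd ℂ (lam j)
        = r := by
  classical
  set s : Setoid (Fin n → ℚ_[p]) := ballSetoid p n t ht with hs
  letI : DecidableEq (Quotient s) := Classical.decEq _
  obtain ⟨r, hr, hsum⟩ := lemA (fun i => Quotient.mk s (x i)) (Quotient.mk s 0) lam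
  refine ⟨r, hr, ?_⟩
  rw [← hsum]
  refine Finset.sum_congr rfl fun i _ => Finset.sum_congr rfl fun j _ => ?_
  have e1 : (Quotient.mk s (x i) = Quotient.mk s 0) ↔ ‖x i‖ < t := by
    rw [Quotient.eq]
    show ‖x i - 0‖ < t ↔ _
    rw [sub_zero]
  have e2 : (Quotient.mk s (x j) = Quotient.mk s 0) ↔ ‖x j‖ < t := by
    rw [Quotient.eq]
    show ‖x j - 0‖ < t ↔ _
    rw [sub_zero]
  have e3 : (Quotient.mk s (x i) = Quotient.mk s (x j)) ↔ ‖x i - x j‖ < t := by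
    rw [Quotient.eq]
    exact Iff.rfl
  have g1 : (if t ≤ ‖x i‖ then (1:ℝ) else 0)
      = (if Quotient.mk s (x i) = Quotient.mk s 0 then (0:ℝ) else 1) := by
    by_cases h : t ≤ ‖x i‖
    · rw [if_pos h, if_neg (fun hq => (not_lt.mpr h) (e1.mp hq))]
    · rw [if_neg h, if_pos (e1.mpr (not_le.mp h))]
  have g2 : (if t ≤ ‖x j‖ then (1:ℝ) else 0)
      = (if Quotient.mk s (x j) = Quotient.mk s 0 then (0:ℝ) else 1) := by
    by_cases h : t ≤ ‖x j‖
    · rw [if_pos h, if_neg (fun hq => (not_lt.mpr h) (e2.mp hq))]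
    · rw [if_neg h, if_pos (e2.mpr (not_le.mp h))]
  have g3 : (if t ≤ ‖x i - x j‖ then (1:ℝ) else 0)
      = (if Quotient.mk s (x i) = Quotient.mk s (x j) then (0:ℝ) else 1) := by
    by_cases h : t ≤ ‖x i - x j‖
    · rw [if_pos h, if_neg (fun hq => (not_lt.mpr h) (e3.mp hq))]
    · rw [if_neg h, if_pos (e3.mpr (not_le.mp h))]
  rw [g1, g2, g3]

lemma exists_zpow_norm {p n : ℕ} [Fact p.Prime] (hn : 0 < n) (x : Fin n → ℚ_[p])
    (hx : x ≠ 0) : ∃ k : ℤ, ‖x‖ = (p:ℝ) ^ k := by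
  haveI : Nonempty (Fin n) := ⟨⟨0, hn⟩⟩
  obtain ⟨i0, -, hi0⟩ := Finset.exists_mem_eq_sup (Finset.univ : Finset (Fin n))
    Finset.univ_nonempty (fun i => ‖x i‖₊)
  have hnorm : ‖x‖ = ‖x i0‖ := by rw [Pi.norm_def, hi0]; rfl
  by_cases h0 : x i0 = 0
  · exact absurd (norm_eq_zero.mp (by rw [hnorm, h0, norm_zero])) hx
  · exact ⟨-(x i0).valuation, by rw [hnorm, Padic.norm_eq_zpow_neg_valuation h0]⟩

/-- For real `a > 0`, `β > 0`, the function `ψ(ξ) = a ‖ξ‖_p^β` is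
negative definite on `ℚ_p^n`: for every `m ≥ 1`, all `x₁, …, x_m ∈ ℚ_p^n` and
`λ₁, …, λ_m ∈ ℂ`, the sum `Σ_{i,j} (ψ(x_i) + conj(ψ(x_j)) − ψ(x_i − x_j)) λ_i conj(λ_j)`
is a nonnegative real number. -/
theorem norm_rpow_negative_definite (p : ℕ) [Fact p.Prime] (n : ℕ) (hn : 0 < n)
    (a β : ℝ) (ha : 0 < a) (hβ : 0 < β)
    (ψ : (Fin n → ℚ_[p]) → ℂ)
    (hψ : ∀ ξ : Fin n → ℚ_[p], ψ ξ = ((a * ‖ξ‖ ^ β : ℝ) : ℂ)) :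
    ∀ (m : ℕ), 1 ≤ m → ∀ (x : Fin m → Fin n → ℚ_[p]) (lam : Fin m → ℂ),
      (∑ i : Fin m, ∑ j : Fin m,
          (ψ (x i) + starRingEnd ℂ (ψ (x j)) - ψ (x i - x j)) * lam i *
            starRingEnd ℂ (lam j)).im = 0 ∧
      0 ≤ (∑ i : Fin m, ∑ j : Fin m,
          (ψ (x i) + starRingEnd ℂ (ψ (x j)) - ψ (x i - x j)) * lam i *
            starRingEnd ℂ (lam j)).re := by
  intro m hm x lam
  classical
  have hex : ∀ y : Fin n → ℚ_[p], ∃ k : ℤ, y ≠ 0 → ‖y‖ = (p:ℝ) ^ k := by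
    intro y
    by_cases hy : y = 0
    · exact ⟨0, fun h => absurd hy h⟩
    · obtain ⟨k, hk⟩ := exists_zpow_norm hn y hy
      exact ⟨k, fun _ => hk⟩
  choose e he using hex
  set E : Finset ℤ := (univ.image fun i => e (x i)) ∪
      (univ.image fun ij : Fin m × Fin m => e (x ij.1 - x ij.2)) with hE
  have hEne : E.Nonempty :=
    ⟨e (x ⟨0, hm⟩), Finset.mem_union_left _ (Finset.mem_image_of_mem _ (Finset.mem_univ _))⟩
  set K := E.min' hEne with hK
  set N := (E.max' hEne - K).toNat with hN
  have hp1 : (1:ℝ) < p := by exact_mod_cast (Fact.out : p.Prime).one_lt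
  set τ : ℕ → ℝ := fun s => (p:ℝ) ^ (K + s : ℤ) with hτ
  have hτpos : ∀ s, 0 < τ s := fun s => zpow_pos (lt_trans one_pos hp1) _
  have hτmono : ∀ s, τ s ≤ τ (s+1) := by
    intro s
    rw [hτ]
    refine zpow_le_zpow_right₀ hp1.le ?_
    push_cast
    omega
  set c : ℕ → ℝ := fun s => if s = 0 then a * τ 0 ^ β
      else a * τ s ^ β - a * τ (s-1) ^ β with hc
  have hsum : ∀ u, ∑ s ∈ range (u+1), c s = a * τ u ^ β := by
    intro u
    induction u with
    | zero => simp [hc]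
    | succ u ih =>
      rw [Finset.sum_range_succ, ih]
      have : c (u+1) = a * τ (u+1) ^ β - a * τ u ^ β := by simp [hc]
      rw [this]; ring
  have hcnn : ∀ s, 0 ≤ c s := by
    intro s
    rcases s with _ | s
    · have : (0:ℝ) ≤ a * τ 0 ^ β :=
        mul_nonneg ha.le (Real.rpow_nonneg (hτpos 0).le β)
      simpa [hc] using this
    · have h1 : τ s ^ β ≤ τ (s+1) ^ β :=
        Real.rpow_le_rpow (hτpos s).le (hτmono s) hβ.le
      have : a * τ s ^ β ≤ a * τ (s+1) ^ β := mul_le_mul_of_nonneg_left h1 ha.le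
      simp only [hc, if_neg (Nat.succ_ne_zero s)]
      simpa using this
  have hrep : ∀ y : Fin n → ℚ_[p], (e y ∈ E ∨ y = 0) →
      a * ‖y‖ ^ β = ∑ s ∈ range (N+1), c s * (if τ s ≤ ‖y‖ then (1:ℝ) else 0) := by
    intro y hy
    by_cases h0 : y = 0
    · subst h0
      rw [norm_zero, Real.zero_rpow hβ.ne', mul_zero]
      refine (Finset.sum_eq_zero fun s _ => ?_).symm
      rw [if_neg (not_le.mpr (hτpos s)), mul_zero]
    · have hyE : e y ∈ E := hy.resolve_right h0
      have hnorm : ‖y‖ = (p:ℝ) ^ (e y) := he y h0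
      have hKle : K ≤ e y := Finset.min'_le E _ hyE
      have hley : e y ≤ E.max' hEne := Finset.le_max' E _ hyE
      set u := (e y - K).toNat with hu
      have huK : (K + u : ℤ) = e y := by
        rw [hu, Int.toNat_of_nonneg (sub_nonneg.mpr hKle)]; ring
      have huN : u ≤ N := by
        rw [hu, hN]; exact Int.toNat_le_toNat (sub_le_sub_right hley K)
      have hτu : τ u = ‖y‖ := by rw [hτ, hnorm, ← huK]
      have hite : ∀ s, c s * (if τ s ≤ ‖y‖ then (1:ℝ) else 0)
          = (if s ≤ u then c s else 0) := by
        intro s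
        have hiff : τ s ≤ ‖y‖ ↔ s ≤ u := by
          rw [hnorm, ← huK, hτ, zpow_le_zpow_iff_right₀ hp1]
          omega
        by_cases h : s ≤ u
        · rw [if_pos (hiff.mpr h), if_pos h, mul_one]
        · rw [if_neg (fun hh => h (hiff.mp hh)), if_neg h, mul_zero]
      rw [Finset.sum_congr rfl fun s _ => hite s]
      have hfilter : (range (N+1)).filter (fun s => s ≤ u) = range (u+1) := by
        ext s; simp only [Finset.mem_filter, Finset.mem_range]; omega
      rw [← Finset.sum_filter, hfilter, hsum u, hτu]
  have hx1 : ∀ i, e (x i) ∈ E ∨ x i = 0 := fun i =>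
    Or.inl (Finset.mem_union_left _ (Finset.mem_image_of_mem _ (Finset.mem_univ i)))
  have hx2 : ∀ i j : Fin m, e (x i - x j) ∈ E ∨ x i - x j = 0 := fun i j =>
    Or.inl (Finset.mem_union_right _
      (Finset.mem_image_of_mem (fun ij : Fin m × Fin m => e (x ij.1 - x ij.2))
        (Finset.mem_univ (i, j))))
  have entry : ∀ i j : Fin m,
      (ψ (x i) + starRingEnd ℂ (ψ (x j)) - ψ (x i - x j)) * lam i * starRingEnd ℂ (lam j)
      = ∑ s ∈ range (N+1), (c s : ℂ) *
          ((((if τ s ≤ ‖x i‖ then (1:ℝ) else 0) + (if τ s ≤ ‖x j‖ then (1:ℝ) else 0)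
              - (if τ s ≤ ‖x i - x j‖ then (1:ℝ) else 0) : ℝ) : ℂ) * lam i
            * starRingEnd ℂ (lam j)) := by
    intro i j
    have hreal : (a * ‖x i‖ ^ β + a * ‖x j‖ ^ β - a * ‖x i - x j‖ ^ β : ℝ)
        = ∑ s ∈ range (N+1), c s * ((if τ s ≤ ‖x i‖ then (1:ℝ) else 0)
            + (if τ s ≤ ‖x j‖ then (1:ℝ) else 0)
            - (if τ s ≤ ‖x i - x j‖ then (1:ℝ) else 0)) := by
      rw [hrep (x i) (hx1 i), hrep (x j) (hx1 j), hrep (x i - x j) (hx2 i j),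
        ← Finset.sum_add_distrib, ← Finset.sum_sub_distrib]
      exact Finset.sum_congr rfl fun s _ => by ring
    rw [hψ, hψ, hψ, Complex.conj_ofReal]
    have h1 : (((a * ‖x i‖ ^ β : ℝ) : ℂ) + ((a * ‖x j‖ ^ β : ℝ) : ℂ)
        - ((a * ‖x i - x j‖ ^ β : ℝ) : ℂ))
        = ((a * ‖x i‖ ^ β + a * ‖x j‖ ^ β - a * ‖x i - x j‖ ^ β : ℝ) : ℂ) := by
      push_cast; ring
    rw [h1, hreal, Complex.ofReal_sum, Finset.sum_mul, Finset.sum_mul]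
    refine Finset.sum_congr rfl fun s _ => ?_
    push_cast
    ring
  have swap : (∑ i : Fin m, ∑ j : Fin m,
        (ψ (x i) + starRingEnd ℂ (ψ (x j)) - ψ (x i - x j)) * lam i * starRingEnd ℂ (lam j))
      = ∑ s ∈ range (N+1), (c s : ℂ) * (∑ i : Fin m, ∑ j : Fin m,
          (((if τ s ≤ ‖x i‖ then (1:ℝ) else 0) + (if τ s ≤ ‖x j‖ then (1:ℝ) else 0)
              - (if τ s ≤ ‖x i - x j‖ then (1:ℝ) else 0) : ℝ) : ℂ) * lam i
            * starRingEnd ℂ (lam j)) := by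
    rw [Finset.sum_congr rfl fun i _ => Finset.sum_congr rfl fun j _ => entry i j]
    rw [Finset.sum_congr rfl fun i (_ : i ∈ univ) => Finset.sum_comm]
    rw [Finset.sum_comm]
    exact Finset.sum_congr rfl fun s _ => by simp only [← Finset.mul_sum]
  choose r hr0 hrs using fun s : ℕ => lemB (hτpos s) x lam
  set R := ∑ s ∈ range (N+1), c s * r s with hR
  have hRnn : 0 ≤ R := Finset.sum_nonneg fun s _ => mul_nonneg (hcnn s) (hr0 s)
  have htot : (∑ i : Fin m, ∑ j : Fin m,
        (ψ (x i) + starRingEnd ℂ (ψ (x j)) - ψ (x i - x j)) * lam i * starRingEnd ℂ (lam j))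
      = (R : ℂ) := by
    rw [swap, hR, Complex.ofReal_sum]
    refine Finset.sum_congr rfl fun s _ => ?_
    rw [hrs s]
    push_cast
    ring
  rw [htot]
  exact ⟨Complex.ofReal_im R, by simpa using hRnn⟩
end

section
/- Let f ∈ ℚ_p[ξ_1, …, ξ_n] be an elliptic polynomial of degree d ≥ 1, i.e. f is homogeneous of degree d and f(ξ) = 0 if and only if ξ = 0. Then there exist positive real constants C₀ and C₁ (depending on f) such that C₀ ‖ξ‖_p^d ≤ |f(ξ)|_p ≤ C₁ ‖ξ‖_p^d for every ξ ∈ ℚ_p^n. -/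
open MvPolynomial

private lemma eval_smul_of_homog {p : ℕ} [Fact p.Prime] {n d : ℕ}
    {f : MvPolynomial (Fin n) ℚ_[p]} (h : f.IsHomogeneous d) (c : ℚ_[p])
    (ξ : Fin n → ℚ_[p]) :
    MvPolynomial.eval (c • ξ) f = c ^ d * MvPolynomial.eval ξ f := by
  rw [eval_eq', eval_eq', Finset.mul_sum]
  apply Finset.sum_congr rfl
  intro m hm
  rw [mem_support_iff] at hm
  have hsum : ∑ i : Fin n, m i = d := by
    have h1 := h hm
    simp only [Finsupp.weight_apply, Pi.one_apply, smul_eq_mul, mul_one, Finsupp.sum] at h1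
    rw [← h1]
    exact (Finset.sum_subset (Finset.subset_univ _)
      (fun i _ hi => by simpa using hi)).symm
  have : ∏ i : Fin n, (c • ξ) i ^ m i = c ^ d * ∏ i : Fin n, ξ i ^ m i := by
    simp only [Pi.smul_apply, smul_eq_mul, mul_pow, Finset.prod_mul_distrib,
      Finset.prod_pow_eq_pow_sum, hsum]
  rw [this]; ring

/-- If `f ∈ ℚ_p[ξ₁, …, ξ_n]` is an elliptic polynomial of degree
`d ≥ 1` (homogeneous of degree `d` and vanishing only at `0`), then there are positive
constants `C₀, C₁` with `C₀ ‖ξ‖_p^d ≤ |f(ξ)|_p ≤ C₁ ‖ξ‖_p^d` for all `ξ ∈ ℚ_p^n`. -/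
theorem elliptic_polynomial_norm_bounds (p : ℕ) [Fact p.Prime] (n : ℕ) (hn : 0 < n)
    (d : ℕ) (hd : 1 ≤ d)
    (f : MvPolynomial (Fin n) ℚ_[p])
    (hhom : f.IsHomogeneous d)
    (hell : ∀ ξ : Fin n → ℚ_[p], MvPolynomial.eval ξ f = 0 ↔ ξ = 0) :
    ∃ C₀ C₁ : ℝ, 0 < C₀ ∧ 0 < C₁ ∧
      ∀ ξ : Fin n → ℚ_[p],
        C₀ * ‖ξ‖ ^ d ≤ ‖MvPolynomial.eval ξ f‖ ∧
        ‖MvPolynomial.eval ξ f‖ ≤ C₁ * ‖ξ‖ ^ d := by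
  set S : Set (Fin n → ℚ_[p]) := Metric.sphere 0 1 with hS
  have hScompact : IsCompact S := isCompact_sphere 0 1
  have hSne : S.Nonempty := by
    refine ⟨Pi.single ⟨0, hn⟩ 1, ?_⟩
    simp [hS, mem_sphere_zero_iff_norm, Pi.norm_single]
  set g : (Fin n → ℚ_[p]) → ℝ := fun ξ => ‖MvPolynomial.eval ξ f‖ with hg
  have hgc : Continuous g := (MvPolynomial.continuous_eval f).norm
  obtain ⟨ξ₀, hξ₀S, hmin⟩ := hScompact.exists_isMinOn hSne hgc.continuousOn
  obtain ⟨ξ₁, hξ₁S, hmax⟩ := hScompact.exists_isMaxOn hSne hgc.continuousOn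
  have hSnorm : ∀ ξ ∈ S, ‖ξ‖ = 1 := fun ξ hξ => mem_sphere_zero_iff_norm.mp hξ
  have hgpos : ∀ ξ ∈ S, 0 < g ξ := by
    intro ξ hξ
    rw [hg]
    simp only [norm_pos_iff]
    intro h0
    have := (hell ξ).mp h0
    rw [this] at hξ
    have := hSnorm _ hξ
    simp at this
  refine ⟨g ξ₀, g ξ₁, hgpos _ hξ₀S, hgpos _ hξ₁S, fun ξ => ?_⟩
  by_cases hξ : ξ = 0
  · subst hξ
    have h0 : MvPolynomial.eval (0 : Fin n → ℚ_[p]) f = 0 := (hell 0).mpr rfl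
    rw [h0]
    simp [zero_pow (by omega : d ≠ 0)]
  · -- find index attaining the sup norm
    have hne : (Finset.univ : Finset (Fin n)).Nonempty := ⟨⟨0, hn⟩, Finset.mem_univ _⟩
    obtain ⟨i, _, hi⟩ := Finset.exists_mem_eq_sup Finset.univ hne fun i => ‖ξ i‖₊
    have hnorm : ‖ξ‖ = ‖ξ i‖ := by
      rw [Pi.norm_def, hi]; rfl
    set c : ℚ_[p] := ξ i with hc
    have hcpos : c ≠ 0 := by
      intro h0
      apply hξ
      have : ‖ξ‖ = 0 := by rw [hnorm, h0, norm_zero]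
      exact norm_eq_zero.mp this
    set η : Fin n → ℚ_[p] := c⁻¹ • ξ with hη
    have hηS : η ∈ S := by
      rw [hS, mem_sphere_zero_iff_norm, hη, norm_smul, norm_inv, ← hnorm,
        inv_mul_cancel₀ (by simpa [hnorm] using (norm_ne_zero_iff.mpr hξ))]
    have hξη : ξ = c • η := by rw [hη, smul_inv_smul₀ hcpos]
    have heval : ‖MvPolynomial.eval ξ f‖ = ‖ξ‖ ^ d * g η := by
      have h2 := eval_smul_of_homog hhom c η
      rw [← hξη] at h2
      rw [h2, norm_mul, norm_pow, hnorm]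
    have hpow : (0:ℝ) ≤ ‖ξ‖ ^ d := pow_nonneg (norm_nonneg _) d
    constructor
    · rw [heval, mul_comm]
      exact mul_le_mul_of_nonneg_left (hmin hηS) hpow
    · rw [heval, mul_comm (g ξ₁)]
      exact mul_le_mul_of_nonneg_left (hmax hηS) hpow
end
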